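/- arXiv:1804.06338 — 3 statements merged into one kernel-verified Lean document; each statement's English description precedes it below -/
import Mathlib

section
/- Let P be a smooth hypergraph property with d(P) = r, let H be a hypergraph, and let L be a list-assignment for H such that H is (P,L)-critical. Then every vertex v of H satisfies d_H(v) ≥ r·|L(v)|. -/
/-- A finite hypergraph: finite vertex set, finite edge (name) set, and an
incidence function assigning to each edge its set of endpoints (at least 2).
Edge names outside `edges` are normalized to have empty incidence. -/
structure FinHypergraph where
  verts : Finset ℕ
  edges : Finset ℕ
  inc : ℕ → Finset ℕ
  inc_sub : ∀ e ∈ edges, inc e ⊆ verts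
  two_le_inc : ∀ e ∈ edges, 2 ≤ (inc e).card
  inc_empty : ∀ e ∉ edges, inc e = ∅

namespace FinHypergraph

theorem inc_subset (H : FinHypergraph) (e : ℕ) : H.inc e ⊆ H.verts := by
  by_cases h : e ∈ H.edges
  · exact H.inc_sub e h
  · rw [H.inc_empty e h]; exact Finset.empty_subset _

/-- Degree of a vertex: number of incident edges. -/
def degree (H : FinHypergraph) (v : ℕ) : ℕ :=
  (H.edges.filter (fun e => v ∈ H.inc e)).card

/-- The set of edges incident with `v`. -/
def edgesAt (H : FinHypergraph) (v : ℕ) : Finset ℕ :=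
  H.edges.filter (fun e => v ∈ H.inc e)

/-- Degree sum `d(H)`. -/
def degSum (H : FinHypergraph) : ℕ := ∑ v ∈ H.verts, H.degree v

/-- Maximum degree `Δ(H)` (0 for the empty hypergraph). -/
def maxDegree (H : FinHypergraph) : ℕ := H.verts.sup H.degree

/-- Minimum degree `δ(H)` (0 for the empty hypergraph). -/
def minDegree (H : FinHypergraph) : ℕ :=
  if h : H.verts.Nonempty then H.verts.inf' h H.degree else 0

/-- Induced subhypergraph `H[X]`. -/
def induce (H : FinHypergraph) (X : Finset ℕ) : FinHypergraph where
  verts := X ∩ H.verts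
  edges := H.edges.filter (fun e => H.inc e ⊆ X ∩ H.verts)
  inc := fun e =>
    if e ∈ H.edges.filter (fun e => H.inc e ⊆ X ∩ H.verts) then H.inc e else ∅
  inc_sub := by
    intro e he
    simp only [if_pos he]
    exact (Finset.mem_filter.mp he).2
  two_le_inc := by
    intro e he
    simp only [if_pos he]
    exact H.two_le_inc e (Finset.mem_filter.mp he).1
  inc_empty := by
    intro e he
    simp only [if_neg he]

/-- The hypergraph `H(X)` obtained by shrinking `H` to `X`. -/
def shrink (H : FinHypergraph) (X : Finset ℕ) : FinHypergraph where
  verts := X ∩ H.verts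
  edges := H.edges.filter (fun e => 2 ≤ (H.inc e ∩ (X ∩ H.verts)).card)
  inc := fun e =>
    if e ∈ H.edges.filter (fun e => 2 ≤ (H.inc e ∩ (X ∩ H.verts)).card) then
      H.inc e ∩ (X ∩ H.verts) else ∅
  inc_sub := by
    intro e he
    simp only [if_pos he]
    exact Finset.inter_subset_right
  two_le_inc := by
    intro e he
    simp only [if_pos he]
    exact (Finset.mem_filter.mp he).2
  inc_empty := by
    intro e he
    simp only [if_neg he]

/-- `H - v`. -/
def deleteVert (H : FinHypergraph) (v : ℕ) : FinHypergraph := H.induce (H.verts.erase v)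

/-- The empty hypergraph `K_0`. -/
def emptyHG : FinHypergraph :=
  ⟨∅, ∅, fun _ => ∅, fun e he => absurd he (Finset.notMem_empty e),
    fun e he => absurd he (Finset.notMem_empty e), fun _ _ => rfl⟩

/-- The one-vertex edgeless hypergraph `K_1` on vertex `v`. -/
def singleHG (v : ℕ) : FinHypergraph :=
  ⟨{v}, ∅, fun _ => ∅, fun e he => absurd he (Finset.notMem_empty e),
    fun e he => absurd he (Finset.notMem_empty e), fun _ _ => rfl⟩

/-- FinHypergraph isomorphism. -/
def Iso (H₁ H₂ : FinHypergraph) : Prop :=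
  ∃ φ ψ : ℕ → ℕ, Set.BijOn φ ↑H₁.verts ↑H₂.verts ∧ Set.BijOn ψ ↑H₁.edges ↑H₂.edges ∧
    ∀ e ∈ H₁.edges, H₂.inc (ψ e) = (H₁.inc e).image φ

/-- A class of hypergraphs closed under isomorphism. -/
def IsoClosed (P : Set FinHypergraph) : Prop :=
  ∀ H₁ H₂ : FinHypergraph, Iso H₁ H₂ → H₁ ∈ P → H₂ ∈ P

/-- Hereditary: closed under induced subhypergraphs. -/
def Hereditary (P : Set FinHypergraph) : Prop :=
  ∀ H ∈ P, ∀ X : Finset ℕ, H.induce X ∈ P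

/-- A smooth hypergraph property: isomorphism-closed, hereditary and non-trivial. -/
def Smooth (P : Set FinHypergraph) : Prop :=
  IsoClosed P ∧ Hereditary P ∧ (∃ H ∈ P, H.verts.Nonempty) ∧ (∃ H : FinHypergraph, H ∉ P)

/-- `F(P)`: hypergraphs not in `P` all of whose vertex-deleted subhypergraphs are in `P`. -/
def critFam (P : Set FinHypergraph) : Set FinHypergraph :=
  {H : FinHypergraph | H ∉ P ∧ ∀ v ∈ H.verts, H.deleteVert v ∈ P}

/-- `d(P) = min {δ(G) : G ∈ F(P)}`. -/
noncomputable def dP (P : Set FinHypergraph) : ℕ := sInf (minDegree '' critFam P)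

/-- Disjoint union of two hypergraphs. -/
def disjUnion (H₁ H₂ : FinHypergraph) : FinHypergraph where
  verts := H₁.verts ∪ H₂.verts
  edges := H₁.edges ∪ H₂.edges
  inc := fun e => H₁.inc e ∪ H₂.inc e
  inc_sub := fun e _ => Finset.union_subset_union (H₁.inc_subset e) (H₂.inc_subset e)
  two_le_inc := by
    intro e he
    rcases Finset.mem_union.mp he with h | h
    · exact le_trans (H₁.two_le_inc e h) (Finset.card_le_card Finset.subset_union_left)
    · exact le_trans (H₂.two_le_inc e h) (Finset.card_le_card Finset.subset_union_right)
  inc_empty := by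
    intro e he
    rw [Finset.mem_union] at he
    push_neg at he
    simp only [H₁.inc_empty e he.1, H₂.inc_empty e he.2, Finset.empty_union]

/-- Additive: closed under vertex-disjoint unions. -/
def Additive (P : Set FinHypergraph) : Prop :=
  ∀ H₁ H₂ : FinHypergraph, H₁ ∈ P → H₂ ∈ P → Disjoint H₁.verts H₂.verts →
    Disjoint H₁.edges H₂.edges → disjUnion H₁ H₂ ∈ P

/-- A `(P,L)`-coloring exists: an `L`-coloring each of whose color classes induces
a hypergraph in `P`. -/
def ColorableWith (P : Set FinHypergraph) (H : FinHypergraph) (L : ℕ → Finset ℕ) : Prop :=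
  ∃ φ : ℕ → ℕ, (∀ v ∈ H.verts, φ v ∈ L v) ∧
    ∀ c : ℕ, H.induce (H.verts.filter (fun v => φ v = c)) ∈ P

/-- `H` is `(P,L)`-critical. -/
def Critical (P : Set FinHypergraph) (H : FinHypergraph) (L : ℕ → Finset ℕ) : Prop :=
  ¬ ColorableWith P H L ∧ ∀ v ∈ H.verts, ColorableWith P (H.deleteVert v) L

/-- The `P`-list-chromatic number `χ^ℓ(H : P)`. -/
noncomputable def listChrom (P : Set FinHypergraph) (H : FinHypergraph) : ℕ :=
  sInf {k : ℕ | ∀ L : ℕ → Finset ℕ, (∀ v ∈ H.verts, k ≤ (L v).card) → ColorableWith P H L}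

/-- The `P`-chromatic number `χ(H : P)`. -/
noncomputable def chrom (P : Set FinHypergraph) (H : FinHypergraph) : ℕ :=
  sInf {k : ℕ | ∃ φ : ℕ → ℕ, (∀ v ∈ H.verts, φ v ∈ Finset.range k) ∧
    ∀ c : ℕ, H.induce (H.verts.filter (fun v => φ v = c)) ∈ P}

/-- `(χ^ℓ, P)`-critical: every proper induced subhypergraph has strictly smaller
`P`-list-chromatic number. -/
def ListCritical (P : Set FinHypergraph) (H : FinHypergraph) : Prop :=
  ∀ X : Finset ℕ, X ⊂ H.verts → listChrom P (H.induce X) < listChrom P H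

/-- Two vertices lie in a common edge. -/
def Adj (H : FinHypergraph) (u v : ℕ) : Prop := ∃ e ∈ H.edges, u ∈ H.inc e ∧ v ∈ H.inc e

/-- Connectedness via hyperpaths. -/
def Connected (H : FinHypergraph) : Prop :=
  H.verts.Nonempty ∧ ∀ u ∈ H.verts, ∀ v ∈ H.verts, Relation.ReflTransGen H.Adj u v

/-- `v` is a separating vertex of `H`. -/
def IsSepVert (H : FinHypergraph) (v : ℕ) : Prop :=
  ∃ X Y : Finset ℕ, X ∪ Y = H.verts ∧ X ∩ Y = {v} ∧ 2 ≤ X.card ∧ 2 ≤ Y.card ∧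
    ∀ e ∈ H.edges, H.inc e ⊆ X ∨ H.inc e ⊆ Y

/-- `B` is a block of `H`: a maximal connected induced subhypergraph without
separating vertices. -/
def IsBlock (H B : FinHypergraph) : Prop :=
  ∃ X ⊆ H.verts, B = H.induce X ∧ B.Connected ∧ (∀ v : ℕ, ¬ B.IsSepVert v) ∧
    ∀ Y : Finset ℕ, X ⊂ Y → Y ⊆ H.verts →
      ¬ ((H.induce Y).Connected ∧ ∀ v : ℕ, ¬ (H.induce Y).IsSepVert v)

/-- Multiplicity of the pair `u, v`. -/
def mult (H : FinHypergraph) (u v : ℕ) : ℕ :=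
  (H.edges.filter (fun e => H.inc e = {u, v})).card

/-- `H = tK_n`: the complete graph on `n` vertices with each edge of multiplicity `t`. -/
def IsTK (H : FinHypergraph) (t n : ℕ) : Prop :=
  H.verts.card = n ∧
    (∀ e ∈ H.edges, ∃ u ∈ H.verts, ∃ v ∈ H.verts, u ≠ v ∧ H.inc e = {u, v}) ∧
    ∀ u ∈ H.verts, ∀ v ∈ H.verts, u ≠ v → H.mult u v = t

/-- `H = tC_n`: the cycle on `n` vertices (ordinary edges) with each edge of
multiplicity `t`. -/
def IsTC (H : FinHypergraph) (t n : ℕ) : Prop :=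
  3 ≤ n ∧ ∃ f : ℕ → ℕ, Set.InjOn f (Set.Iio n) ∧
    H.verts = (Finset.range n).image f ∧
    (∀ e ∈ H.edges, ∃ i < n, H.inc e = {f i, f ((i + 1) % n)}) ∧
    ∀ i < n, (H.edges.filter (fun e => H.inc e = {f i, f ((i + 1) % n)})).card = t

/-- A brick: `tC_n` with `n ≥ 3` odd, or `tK_n`. -/
def IsBrick (H : FinHypergraph) : Prop :=
  (∃ t ≥ 1, ∃ n : ℕ, 3 ≤ n ∧ Odd n ∧ IsTC H t n) ∨ (∃ t ≥ 1, ∃ n ≥ 1, IsTK H t n)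

/-- `r`-regular. -/
def IsRegular (H : FinHypergraph) (r : ℕ) : Prop := ∀ v ∈ H.verts, H.degree v = r

/-- Simple: no parallel edges. -/
def Simple (H : FinHypergraph) : Prop :=
  ∀ e ∈ H.edges, ∀ e' ∈ H.edges, e ≠ e' → H.inc e ≠ H.inc e'

/-- The set `V(H, P, L)` of low vertices (for `d(P) = r`). -/
def lowVerts (H : FinHypergraph) (L : ℕ → Finset ℕ) (r : ℕ) : Finset ℕ :=
  H.verts.filter (fun v => H.degree v = r * (L v).card)

end FinHypergraph

open FinHypergraph

namespace FinHypergraph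

lemma hg_ext {H₁ H₂ : FinHypergraph} (hv : H₁.verts = H₂.verts)
    (he : H₁.edges = H₂.edges) (hi : H₁.inc = H₂.inc) : H₁ = H₂ := by
  cases H₁; cases H₂; simp_all

lemma induce_verts' (H : FinHypergraph) (X : Finset ℕ) : (H.induce X).verts = X ∩ H.verts := rfl

lemma induce_edges (H : FinHypergraph) (X : Finset ℕ) :
    (H.induce X).edges = H.edges.filter (fun e => H.inc e ⊆ X ∩ H.verts) := rfl

lemma induce_inc_of_mem (H : FinHypergraph) (X : Finset ℕ) {e : ℕ} (he : e ∈ (H.induce X).edges) :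
    (H.induce X).inc e = H.inc e := if_pos he

lemma induce_inc_of_not_mem (H : FinHypergraph) (X : Finset ℕ) {e : ℕ}
    (he : e ∉ (H.induce X).edges) : (H.induce X).inc e = ∅ := if_neg he

lemma induce_induce (H : FinHypergraph) (Y X : Finset ℕ) :
    (H.induce Y).induce X = H.induce (X ∩ Y) := by
  have hverts : ((H.induce Y).induce X).verts = (H.induce (X ∩ Y)).verts := by
    rw [induce_verts', induce_verts', induce_verts', Finset.inter_assoc]
  have hedges : ((H.induce Y).induce X).edges = (H.induce (X ∩ Y)).edges := by
    ext e
    rw [induce_edges, Finset.mem_filter, induce_edges, Finset.mem_filter, induce_edges, Finset.mem_filter]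
    simp only [induce_verts']
    constructor
    · rintro ⟨⟨he, h1⟩, h2⟩
      have heY : e ∈ (H.induce Y).edges := by
        rw [induce_edges, Finset.mem_filter]; exact ⟨he, h1⟩
      rw [induce_inc_of_mem H Y heY] at h2
      refine ⟨he, fun x hx => ?_⟩
      have := h2 hx
      simp only [Finset.mem_inter] at this ⊢
      tauto
    · rintro ⟨he, h2⟩
      have h1 : H.inc e ⊆ Y ∩ H.verts := by
        intro x hx
        have := h2 hx
        simp only [Finset.mem_inter] at this ⊢
        tauto
      have heY : e ∈ (H.induce Y).edges := by
        rw [induce_edges, Finset.mem_filter]; exact ⟨he, h1⟩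
      refine ⟨⟨he, h1⟩, ?_⟩
      rw [induce_inc_of_mem H Y heY]
      intro x hx
      have := h2 hx
      simp only [Finset.mem_inter] at this ⊢
      tauto
  refine hg_ext hverts hedges ?_
  funext e
  by_cases he : e ∈ (H.induce (X ∩ Y)).edges
  · have he1 : e ∈ ((H.induce Y).induce X).edges := hedges ▸ he
    have he2 : e ∈ (H.induce Y).edges := by
      rw [induce_edges, Finset.mem_filter] at he1; exact he1.1
    rw [induce_inc_of_mem _ _ he, induce_inc_of_mem _ _ he1, induce_inc_of_mem _ _ he2]
  · have he1 : e ∉ ((H.induce Y).induce X).edges := hedges ▸ he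
    rw [induce_inc_of_not_mem _ _ he, induce_inc_of_not_mem _ _ he1]

lemma induce_degree (H : FinHypergraph) (X : Finset ℕ) (v : ℕ) :
    (H.induce X).degree v
      = (H.edges.filter (fun e => (H.inc e ⊆ X ∩ H.verts) ∧ v ∈ H.inc e)).card := by
  have h1 : (H.induce X).edges.filter (fun e => v ∈ (H.induce X).inc e)
      = (H.induce X).edges.filter (fun e => v ∈ H.inc e) := by
    apply Finset.filter_congr
    intro e he
    rw [induce_inc_of_mem H X he]
  unfold degree
  rw [h1, induce_edges, Finset.filter_filter]

end FinHypergraph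

/-- in a `(P,L)`-critical hypergraph every vertex satisfies
`d_H(v) ≥ r·|L(v)|` where `r = d(P)`. -/
theorem stmt4 (P : Set FinHypergraph) (hP : Smooth P) (r : ℕ) (hr : dP P = r)
    (H : FinHypergraph) (L : ℕ → Finset ℕ) (hcrit : Critical P H L) :
    ∀ v ∈ H.verts, r * (L v).card ≤ H.degree v := by
  classical
  obtain ⟨_, hHer, _, _⟩ := hP
  intro v hv
  obtain ⟨hnc, hdel⟩ := hcrit
  obtain ⟨φ, hφmem, hφP⟩ := hdel v hv
  set S : ℕ → Finset ℕ := fun c => (H.verts.erase v).filter (fun u => φ u = c) with hS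
  have hDverts : (H.deleteVert v).verts = H.verts.erase v := by
    rw [deleteVert, induce_verts', Finset.inter_eq_left.mpr (Finset.erase_subset _ _)]
  -- each color class of φ (in H - v) induces a hypergraph in P
  have hSP : ∀ c, H.induce (S c) ∈ P := by
    intro c
    have h := hφP c
    have hT : (H.deleteVert v).verts.filter (fun u => φ u = c) = S c := by
      rw [hDverts]
    rw [hT, show (H.deleteVert v) = H.induce (H.verts.erase v) from rfl,
      induce_induce, Finset.inter_eq_left.mpr (Finset.filter_subset _ _)] at h
    exact h
  -- v together with the class of c induces a hypergraph not in P
  have hXc : ∀ c ∈ L v, H.induce (insert v (S c)) ∉ P := by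
    intro c hc hmem
    apply hnc
    refine ⟨Function.update φ v c, ?_, ?_⟩
    · intro u hu
      by_cases h : u = v
      · subst h; simpa using hc
      · rw [Function.update_of_ne h]
        apply hφmem
        rw [hDverts]; exact Finset.mem_erase.mpr ⟨h, hu⟩
    · intro d
      by_cases hd : c = d
      · subst hd
        have hTd : H.verts.filter (fun u => Function.update φ v c u = c) = insert v (S c) := by
          ext u
          simp only [Finset.mem_filter, Finset.mem_insert, hS, Finset.mem_erase]
          constructor
          · rintro ⟨hu, hupd⟩
            by_cases h : u = v
            · exact Or.inl h
            · rw [Function.update_of_ne h] at hupd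
              exact Or.inr ⟨⟨h, hu⟩, hupd⟩
          · rintro (h | ⟨⟨h1, h2⟩, h3⟩)
            · subst h; simp [hv]
            · exact ⟨h2, by rw [Function.update_of_ne h1]; exact h3⟩
        rw [hTd]; exact hmem
      · have hTd : H.verts.filter (fun u => Function.update φ v c u = d) = S d := by
          ext u
          simp only [Finset.mem_filter, hS, Finset.mem_erase]
          constructor
          · rintro ⟨hu, hupd⟩
            by_cases h : u = v
            · subst h; rw [Function.update_self] at hupd; exact absurd hupd hd
            · rw [Function.update_of_ne h] at hupd
              exact ⟨⟨h, hu⟩, hupd⟩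
          · rintro ⟨⟨h1, h2⟩, h3⟩
            exact ⟨h2, by rw [Function.update_of_ne h1]; exact h3⟩
        rw [hTd]; exact hSP d
  -- for each c ∈ L v there are at least r edges at v inside {v} ∪ S c
  have key : ∀ c ∈ L v,
      r ≤ ((H.edgesAt v).filter (fun e => H.inc e ⊆ insert v (S c))).card := by
    intro c hc
    have hfam : (insert v (S c)) ∈ ((insert v (S c)).powerset.filter
        (fun X => v ∈ X ∧ H.induce X ∉ P)) := by
      simp only [Finset.mem_filter, Finset.mem_powerset]
      exact ⟨Finset.Subset.refl _, Finset.mem_insert_self _ _, hXc c hc⟩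
    obtain ⟨X, hXmem, hXmin⟩ := Finset.exists_min_image _ Finset.card ⟨_, hfam⟩
    rw [Finset.mem_filter, Finset.mem_powerset] at hXmem
    obtain ⟨hXsub, hvX, hXnP⟩ := hXmem
    have hvXV : v ∈ (H.induce X).verts := by
      rw [induce_verts']; exact Finset.mem_inter.mpr ⟨hvX, hv⟩
    have hcf : H.induce X ∈ critFam P := by
      refine ⟨hXnP, ?_⟩
      intro u hu
      rw [induce_verts'] at hu
      have heq : (H.induce X).deleteVert u = H.induce (((X ∩ H.verts).erase u) ∩ X) := by
        rw [show (H.induce X).deleteVert u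
            = (H.induce X).induce ((H.induce X).verts.erase u) from rfl,
          induce_verts', induce_induce]
      rw [heq]
      set X' := ((X ∩ H.verts).erase u) ∩ X with hX'
      by_cases huv : u = v
      · subst huv
        have hsub : X' ⊆ S c := by
          intro x hx
          obtain ⟨hx1, hx2⟩ := Finset.mem_inter.mp hx
          have hxv : x ≠ u := (Finset.mem_erase.mp hx1).1
          rcases Finset.mem_insert.mp (hXsub hx2) with h | h
          · exact absurd h hxv
          · exact h
        have heq2 : H.induce X' = (H.induce (S c)).induce X' := by
          rw [induce_induce, Finset.inter_eq_left.mpr hsub]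
        rw [heq2]
        exact hHer _ (hSP c) X'
      · have huX : u ∈ X := (Finset.mem_inter.mp hu).1
        have hX'sub : X' ⊆ insert v (S c) := fun x hx =>
          hXsub (Finset.mem_inter.mp hx).2
        have hvX' : v ∈ X' := by
          refine Finset.mem_inter.mpr ⟨Finset.mem_erase.mpr ⟨fun h => huv h.symm, ?_⟩, hvX⟩
          exact Finset.mem_inter.mpr ⟨hvX, hv⟩
        by_contra hnp
        have hX'card : X'.card < X.card := by
          have hss : X' ⊆ X.erase u := by
            intro x hx
            exact Finset.mem_erase.mpr
              ⟨(Finset.mem_erase.mp (Finset.mem_inter.mp hx).1).1,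
                (Finset.mem_inter.mp hx).2⟩
          calc X'.card ≤ (X.erase u).card := Finset.card_le_card hss
            _ < X.card := Finset.card_erase_lt_of_mem huX
        have hmin := hXmin X' (by
          rw [Finset.mem_filter, Finset.mem_powerset]
          exact ⟨hX'sub, hvX', hnp⟩)
        omega
    have hrdeg : r ≤ (H.induce X).degree v := by
      have h1 : dP P ≤ minDegree (H.induce X) := Nat.sInf_le ⟨_, hcf, rfl⟩
      have hne : (H.induce X).verts.Nonempty := ⟨v, hvXV⟩
      have h2 : minDegree (H.induce X) ≤ (H.induce X).degree v := by
        rw [minDegree, dif_pos hne]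
        exact Finset.inf'_le _ hvXV
      omega
    refine le_trans hrdeg ?_
    rw [induce_degree]
    apply Finset.card_le_card
    intro e he
    rw [Finset.mem_filter] at he
    obtain ⟨heE, hsub, hvin⟩ := he
    rw [edgesAt, Finset.mem_filter, Finset.mem_filter]
    refine ⟨⟨heE, hvin⟩, ?_⟩
    exact fun x hx => hXsub (Finset.mem_inter.mp (hsub hx)).1
  -- the edge sets for distinct colors are disjoint
  have hdisj : ∀ c ∈ L v, ∀ c' ∈ L v, c ≠ c' →
      Disjoint ((H.edgesAt v).filter (fun e => H.inc e ⊆ insert v (S c)))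
               ((H.edgesAt v).filter (fun e => H.inc e ⊆ insert v (S c'))) := by
    intro c _ c' _ hcc'
    rw [Finset.disjoint_left]
    intro e he1 he2
    rw [Finset.mem_filter] at he1 he2
    have heE : e ∈ H.edges := (Finset.mem_filter.mp he1.1).1
    obtain ⟨u, hu, huv⟩ := Finset.exists_mem_ne
      (lt_of_lt_of_le one_lt_two (H.two_le_inc e heE)) v
    have h1 := he1.2 hu
    have h2 := he2.2 hu
    rw [Finset.mem_insert] at h1 h2
    have hu1 : u ∈ S c := h1.resolve_left huv
    have hu2 : u ∈ S c' := h2.resolve_left huv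
    rw [hS, Finset.mem_filter] at hu1 hu2
    exact hcc' (hu1.2.symm.trans hu2.2)
  calc r * (L v).card = ∑ _c ∈ L v, r := by rw [Finset.sum_const, smul_eq_mul, mul_comm]
    _ ≤ ∑ c ∈ L v, ((H.edgesAt v).filter (fun e => H.inc e ⊆ insert v (S c))).card :=
        Finset.sum_le_sum key
    _ = ((L v).biUnion
          (fun c => (H.edgesAt v).filter (fun e => H.inc e ⊆ insert v (S c)))).card :=
        (Finset.card_biUnion hdisj).symm
    _ ≤ (H.edgesAt v).card := Finset.card_le_card (by
        intro e he
        obtain ⟨c, _, hc⟩ := Finset.mem_biUnion.mp he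
        exact Finset.mem_of_mem_filter _ hc)
    _ = H.degree v := rfl
end

section
/- Let P be a smooth hypergraph property with d(P) = r ≥ 1. Then every hypergraph H satisfies χ^ℓ(H : P) ≤ Δ(H)/r + 1. -/
/-- A finite hypergraph: finite vertex set, finite edge (name) set, and an
incidence function assigning to each edge its set of endpoints (at least 2).
Edge names outside `edges` are normalized to have empty incidence. -/
structure HGraph where
  verts : Finset ℕ
  edges : Finset ℕ
  inc : ℕ → Finset ℕ
  inc_sub : ∀ e ∈ edges, inc e ⊆ verts
  two_le_inc : ∀ e ∈ edges, 2 ≤ (inc e).card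
  inc_empty : ∀ e ∉ edges, inc e = ∅

namespace HGraph

theorem inc_subset (H : HGraph) (e : ℕ) : H.inc e ⊆ H.verts := by
  by_cases h : e ∈ H.edges
  · exact H.inc_sub e h
  · rw [H.inc_empty e h]; exact Finset.empty_subset _

/-- Degree of a vertex: number of incident edges. -/
def degree (H : HGraph) (v : ℕ) : ℕ :=
  (H.edges.filter (fun e => v ∈ H.inc e)).card

/-- The set of edges incident with `v`. -/
def edgesAt (H : HGraph) (v : ℕ) : Finset ℕ :=
  H.edges.filter (fun e => v ∈ H.inc e)

/-- Degree sum `d(H)`. -/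
def degSum (H : HGraph) : ℕ := ∑ v ∈ H.verts, H.degree v

/-- Maximum degree `Δ(H)` (0 for the empty hypergraph). -/
def maxDegree (H : HGraph) : ℕ := H.verts.sup H.degree

/-- Minimum degree `δ(H)` (0 for the empty hypergraph). -/
def minDegree (H : HGraph) : ℕ :=
  if h : H.verts.Nonempty then H.verts.inf' h H.degree else 0

/-- Induced subhypergraph `H[X]`. -/
def induce (H : HGraph) (X : Finset ℕ) : HGraph where
  verts := X ∩ H.verts
  edges := H.edges.filter (fun e => H.inc e ⊆ X ∩ H.verts)
  inc := fun e =>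
    if e ∈ H.edges.filter (fun e => H.inc e ⊆ X ∩ H.verts) then H.inc e else ∅
  inc_sub := by
    intro e he
    simp only [if_pos he]
    exact (Finset.mem_filter.mp he).2
  two_le_inc := by
    intro e he
    simp only [if_pos he]
    exact H.two_le_inc e (Finset.mem_filter.mp he).1
  inc_empty := by
    intro e he
    simp only [if_neg he]

/-- The hypergraph `H(X)` obtained by shrinking `H` to `X`. -/
def shrink (H : HGraph) (X : Finset ℕ) : HGraph where
  verts := X ∩ H.verts
  edges := H.edges.filter (fun e => 2 ≤ (H.inc e ∩ (X ∩ H.verts)).card)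
  inc := fun e =>
    if e ∈ H.edges.filter (fun e => 2 ≤ (H.inc e ∩ (X ∩ H.verts)).card) then
      H.inc e ∩ (X ∩ H.verts) else ∅
  inc_sub := by
    intro e he
    simp only [if_pos he]
    exact Finset.inter_subset_right
  two_le_inc := by
    intro e he
    simp only [if_pos he]
    exact (Finset.mem_filter.mp he).2
  inc_empty := by
    intro e he
    simp only [if_neg he]

/-- `H - v`. -/
def deleteVert (H : HGraph) (v : ℕ) : HGraph := H.induce (H.verts.erase v)

/-- The empty hypergraph `K_0`. -/
def emptyHG : HGraph :=
  ⟨∅, ∅, fun _ => ∅, fun e he => absurd he (Finset.notMem_empty e),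
    fun e he => absurd he (Finset.notMem_empty e), fun _ _ => rfl⟩

/-- The one-vertex edgeless hypergraph `K_1` on vertex `v`. -/
def singleHG (v : ℕ) : HGraph :=
  ⟨{v}, ∅, fun _ => ∅, fun e he => absurd he (Finset.notMem_empty e),
    fun e he => absurd he (Finset.notMem_empty e), fun _ _ => rfl⟩

/-- Hypergraph isomorphism. -/
def Iso (H₁ H₂ : HGraph) : Prop :=
  ∃ φ ψ : ℕ → ℕ, Set.BijOn φ ↑H₁.verts ↑H₂.verts ∧ Set.BijOn ψ ↑H₁.edges ↑H₂.edges ∧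
    ∀ e ∈ H₁.edges, H₂.inc (ψ e) = (H₁.inc e).image φ

/-- A class of hypergraphs closed under isomorphism. -/
def IsoClosed (P : Set HGraph) : Prop :=
  ∀ H₁ H₂ : HGraph, Iso H₁ H₂ → H₁ ∈ P → H₂ ∈ P

/-- Hereditary: closed under induced subhypergraphs. -/
def Hereditary (P : Set HGraph) : Prop :=
  ∀ H ∈ P, ∀ X : Finset ℕ, H.induce X ∈ P

/-- A smooth hypergraph property: isomorphism-closed, hereditary and non-trivial. -/
def Smooth (P : Set HGraph) : Prop :=
  IsoClosed P ∧ Hereditary P ∧ (∃ H ∈ P, H.verts.Nonempty) ∧ (∃ H : HGraph, H ∉ P)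

/-- `F(P)`: hypergraphs not in `P` all of whose vertex-deleted subhypergraphs are in `P`. -/
def critFam (P : Set HGraph) : Set HGraph :=
  {H : HGraph | H ∉ P ∧ ∀ v ∈ H.verts, H.deleteVert v ∈ P}

/-- `d(P) = min {δ(G) : G ∈ F(P)}`. -/
noncomputable def dP (P : Set HGraph) : ℕ := sInf (minDegree '' critFam P)

/-- Disjoint union of two hypergraphs. -/
def disjUnion (H₁ H₂ : HGraph) : HGraph where
  verts := H₁.verts ∪ H₂.verts
  edges := H₁.edges ∪ H₂.edges
  inc := fun e => H₁.inc e ∪ H₂.inc e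
  inc_sub := fun e _ => Finset.union_subset_union (H₁.inc_subset e) (H₂.inc_subset e)
  two_le_inc := by
    intro e he
    rcases Finset.mem_union.mp he with h | h
    · exact le_trans (H₁.two_le_inc e h) (Finset.card_le_card Finset.subset_union_left)
    · exact le_trans (H₂.two_le_inc e h) (Finset.card_le_card Finset.subset_union_right)
  inc_empty := by
    intro e he
    rw [Finset.mem_union] at he
    push_neg at he
    simp only [H₁.inc_empty e he.1, H₂.inc_empty e he.2, Finset.empty_union]

/-- Additive: closed under vertex-disjoint unions. -/
def Additive (P : Set HGraph) : Prop :=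
  ∀ H₁ H₂ : HGraph, H₁ ∈ P → H₂ ∈ P → Disjoint H₁.verts H₂.verts →
    Disjoint H₁.edges H₂.edges → disjUnion H₁ H₂ ∈ P

/-- A `(P,L)`-coloring exists: an `L`-coloring each of whose color classes induces
a hypergraph in `P`. -/
def ColorableWith (P : Set HGraph) (H : HGraph) (L : ℕ → Finset ℕ) : Prop :=
  ∃ φ : ℕ → ℕ, (∀ v ∈ H.verts, φ v ∈ L v) ∧
    ∀ c : ℕ, H.induce (H.verts.filter (fun v => φ v = c)) ∈ P

/-- `H` is `(P,L)`-critical. -/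
def Critical (P : Set HGraph) (H : HGraph) (L : ℕ → Finset ℕ) : Prop :=
  ¬ ColorableWith P H L ∧ ∀ v ∈ H.verts, ColorableWith P (H.deleteVert v) L

/-- The `P`-list-chromatic number `χ^ℓ(H : P)`. -/
noncomputable def listChrom (P : Set HGraph) (H : HGraph) : ℕ :=
  sInf {k : ℕ | ∀ L : ℕ → Finset ℕ, (∀ v ∈ H.verts, k ≤ (L v).card) → ColorableWith P H L}

/-- The `P`-chromatic number `χ(H : P)`. -/
noncomputable def chrom (P : Set HGraph) (H : HGraph) : ℕ :=
  sInf {k : ℕ | ∃ φ : ℕ → ℕ, (∀ v ∈ H.verts, φ v ∈ Finset.range k) ∧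
    ∀ c : ℕ, H.induce (H.verts.filter (fun v => φ v = c)) ∈ P}

/-- `(χ^ℓ, P)`-critical: every proper induced subhypergraph has strictly smaller
`P`-list-chromatic number. -/
def ListCritical (P : Set HGraph) (H : HGraph) : Prop :=
  ∀ X : Finset ℕ, X ⊂ H.verts → listChrom P (H.induce X) < listChrom P H

/-- Two vertices lie in a common edge. -/
def Adj (H : HGraph) (u v : ℕ) : Prop := ∃ e ∈ H.edges, u ∈ H.inc e ∧ v ∈ H.inc e

/-- Connectedness via hyperpaths. -/
def Connected (H : HGraph) : Prop :=
  H.verts.Nonempty ∧ ∀ u ∈ H.verts, ∀ v ∈ H.verts, Relation.ReflTransGen H.Adj u v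

/-- `v` is a separating vertex of `H`. -/
def IsSepVert (H : HGraph) (v : ℕ) : Prop :=
  ∃ X Y : Finset ℕ, X ∪ Y = H.verts ∧ X ∩ Y = {v} ∧ 2 ≤ X.card ∧ 2 ≤ Y.card ∧
    ∀ e ∈ H.edges, H.inc e ⊆ X ∨ H.inc e ⊆ Y

/-- `B` is a block of `H`: a maximal connected induced subhypergraph without
separating vertices. -/
def IsBlock (H B : HGraph) : Prop :=
  ∃ X ⊆ H.verts, B = H.induce X ∧ B.Connected ∧ (∀ v : ℕ, ¬ B.IsSepVert v) ∧
    ∀ Y : Finset ℕ, X ⊂ Y → Y ⊆ H.verts →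
      ¬ ((H.induce Y).Connected ∧ ∀ v : ℕ, ¬ (H.induce Y).IsSepVert v)

/-- Multiplicity of the pair `u, v`. -/
def mult (H : HGraph) (u v : ℕ) : ℕ :=
  (H.edges.filter (fun e => H.inc e = {u, v})).card

/-- `H = tK_n`: the complete graph on `n` vertices with each edge of multiplicity `t`. -/
def IsTK (H : HGraph) (t n : ℕ) : Prop :=
  H.verts.card = n ∧
    (∀ e ∈ H.edges, ∃ u ∈ H.verts, ∃ v ∈ H.verts, u ≠ v ∧ H.inc e = {u, v}) ∧
    ∀ u ∈ H.verts, ∀ v ∈ H.verts, u ≠ v → H.mult u v = t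

/-- `H = tC_n`: the cycle on `n` vertices (ordinary edges) with each edge of
multiplicity `t`. -/
def IsTC (H : HGraph) (t n : ℕ) : Prop :=
  3 ≤ n ∧ ∃ f : ℕ → ℕ, Set.InjOn f (Set.Iio n) ∧
    H.verts = (Finset.range n).image f ∧
    (∀ e ∈ H.edges, ∃ i < n, H.inc e = {f i, f ((i + 1) % n)}) ∧
    ∀ i < n, (H.edges.filter (fun e => H.inc e = {f i, f ((i + 1) % n)})).card = t

/-- A brick: `tC_n` with `n ≥ 3` odd, or `tK_n`. -/
def IsBrick (H : HGraph) : Prop :=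
  (∃ t ≥ 1, ∃ n : ℕ, 3 ≤ n ∧ Odd n ∧ IsTC H t n) ∨ (∃ t ≥ 1, ∃ n ≥ 1, IsTK H t n)

/-- `r`-regular. -/
def IsRegular (H : HGraph) (r : ℕ) : Prop := ∀ v ∈ H.verts, H.degree v = r

/-- Simple: no parallel edges. -/
def Simple (H : HGraph) : Prop :=
  ∀ e ∈ H.edges, ∀ e' ∈ H.edges, e ≠ e' → H.inc e ≠ H.inc e'

/-- The set `V(H, P, L)` of low vertices (for `d(P) = r`). -/
def lowVerts (H : HGraph) (L : ℕ → Finset ℕ) (r : ℕ) : Finset ℕ :=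
  H.verts.filter (fun v => H.degree v = r * (L v).card)

end HGraph

open HGraph

section Aux

theorem hgExt {H₁ H₂ : HGraph} (hv : H₁.verts = H₂.verts) (he : H₁.edges = H₂.edges)
    (hi : ∀ e ∈ H₁.edges, H₁.inc e = H₂.inc e) : H₁ = H₂ := by
  have hinc : H₁.inc = H₂.inc := by
    funext e
    by_cases h : e ∈ H₁.edges
    · exact hi e h
    · rw [H₁.inc_empty e h, H₂.inc_empty e (he ▸ h)]
  cases H₁; cases H₂
  simp only at hv he hinc
  subst hv he hinc
  rfl

theorem induce_verts (H : HGraph) (X : Finset ℕ) :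
    (H.induce X).verts = X ∩ H.verts := rfl

theorem mem_induce_edges {H : HGraph} {X : Finset ℕ} {e : ℕ} :
    e ∈ (H.induce X).edges ↔ e ∈ H.edges ∧ H.inc e ⊆ X ∩ H.verts := Finset.mem_filter

theorem induce_inc_of_mem {H : HGraph} {X : Finset ℕ} {e : ℕ}
    (he : e ∈ (H.induce X).edges) : (H.induce X).inc e = H.inc e := by
  show (if e ∈ H.edges.filter (fun e => H.inc e ⊆ X ∩ H.verts) then H.inc e else ∅) = H.inc e
  exact if_pos he

theorem induce_induce (H : HGraph) (X Y : Finset ℕ) :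
    (H.induce Y).induce X = H.induce (X ∩ Y) := by
  have he : ((H.induce Y).induce X).edges = (H.induce (X ∩ Y)).edges := by
    ext e
    simp only [mem_induce_edges, induce_verts]
    constructor
    · rintro ⟨⟨h1, h2⟩, h3⟩
      rw [induce_inc_of_mem (mem_induce_edges.mpr ⟨h1, h2⟩)] at h3
      refine ⟨h1, ?_⟩
      rw [Finset.inter_assoc]
      exact h3
    · rintro ⟨h1, h2⟩
      rw [Finset.inter_assoc] at h2
      have h2' : H.inc e ⊆ Y ∩ H.verts := h2.trans Finset.inter_subset_right
      refine ⟨⟨h1, h2'⟩, ?_⟩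
      rw [induce_inc_of_mem (mem_induce_edges.mpr ⟨h1, h2'⟩)]
      exact h2
  have hv : ((H.induce Y).induce X).verts = (H.induce (X ∩ Y)).verts := by
    simp only [induce_verts, Finset.inter_assoc]
  refine hgExt hv he ?_
  intro e hee
  have hee' : e ∈ (H.induce (X ∩ Y)).edges := by rw [← he]; exact hee
  rw [induce_inc_of_mem hee, induce_inc_of_mem (mem_induce_edges.mp hee).1,
    induce_inc_of_mem hee']

theorem induce_self (H : HGraph) : H.induce H.verts = H := by
  have he : (H.induce H.verts).edges = H.edges := by
    ext e
    simp only [mem_induce_edges, Finset.inter_self]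
    exact ⟨fun h => h.1, fun h => ⟨h, H.inc_sub e h⟩⟩
  refine hgExt (by simp [induce_verts]) he ?_
  intro e hee
  rw [induce_inc_of_mem hee]

theorem induce_empty (H : HGraph) : H.induce ∅ = emptyHG := by
  have he : (H.induce ∅).edges = (∅ : Finset ℕ) := by
    ext e
    simp only [mem_induce_edges, Finset.empty_inter, Finset.subset_empty,
      Finset.notMem_empty, iff_false]
    rintro ⟨h1, h2⟩
    have := H.two_le_inc e h1
    rw [h2] at this
    simp at this
  refine hgExt (by simp [induce_verts]; rfl) (by rw [he]; rfl) ?_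
  intro e hee
  rw [he] at hee
  exact absurd hee (Finset.notMem_empty e)

theorem deleteVert_verts (H : HGraph) (v : ℕ) :
    (H.deleteVert v).verts = H.verts.erase v := by
  show (H.verts.erase v) ∩ H.verts = H.verts.erase v
  exact Finset.inter_eq_left.mpr (Finset.erase_subset v H.verts)

theorem degree_induce_le (H : HGraph) (X : Finset ℕ) (u : ℕ) :
    (H.induce X).degree u ≤ H.degree u := by
  unfold HGraph.degree
  apply Finset.card_le_card
  intro e he
  rw [Finset.mem_filter] at he ⊢
  obtain ⟨he1, he2⟩ := he
  rw [induce_inc_of_mem he1] at he2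
  exact ⟨(mem_induce_edges.mp he1).1, he2⟩

theorem emptyHG_mem (P : Set HGraph) (hP : Smooth P) : emptyHG ∈ P := by
  obtain ⟨-, hHer, ⟨H0, hH0, -⟩, -⟩ := hP
  have := hHer H0 hH0 ∅
  rwa [induce_empty] at this

/-- Extract a member of `critFam P` inside any bad induced subhypergraph. -/
theorem exists_crit (P : Set HGraph) (H : HGraph) :
    ∀ S : Finset ℕ, H.induce S ∉ P → ∃ T ⊆ S, H.induce T ∈ critFam P := by
  intro S
  induction S using Finset.strongInductionOn with
  | _ S ih =>
    intro hS
    by_cases hall : ∀ v ∈ (H.induce S).verts, (H.induce S).deleteVert v ∈ P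
    · exact ⟨S, Finset.Subset.refl S, hS, hall⟩
    · push_neg at hall
      obtain ⟨v, hv, hdel⟩ := hall
      rw [induce_verts] at hv
      set T₀ : Finset ℕ := ((S ∩ H.verts).erase v) ∩ S with hT₀
      have hdel' : (H.induce S).deleteVert v = H.induce T₀ := by
        show (H.induce S).induce ((H.induce S).verts.erase v) = H.induce T₀
        rw [induce_verts, induce_induce]
      rw [hdel'] at hdel
      have hsub : T₀ ⊂ S := by
        constructor
        · exact Finset.inter_subset_right
        · intro hcon
          have : v ∈ T₀ := hcon (Finset.mem_inter.mp hv).1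
          simp [hT₀] at this
      obtain ⟨T, hTsub, hT⟩ := ih T₀ hsub hdel
      exact ⟨T, hTsub.trans hsub.subset, hT⟩

theorem crit_minDeg (P : Set HGraph) (r : ℕ) (hr : dP P = r)
    {G : HGraph} (hG : G ∈ critFam P) {v : ℕ} (hv : v ∈ G.verts) :
    r ≤ G.degree v := by
  have h1 : dP P ≤ G.minDegree := Nat.sInf_le ⟨G, hG, rfl⟩
  rw [hr] at h1
  refine h1.trans ?_
  unfold HGraph.minDegree
  rw [dif_pos ⟨v, hv⟩]
  exact Finset.inf'_le _ hv

/-- Main lemma: degrees strictly below `r·|L(v)|` force `(P,L)`-colorability. -/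
theorem colorable_of_deg (P : Set HGraph) (hP : Smooth P) (r : ℕ) (hr : dP P = r) :
    ∀ n (H : HGraph), H.verts.card ≤ n → ∀ L : ℕ → Finset ℕ,
      (∀ v ∈ H.verts, H.degree v < r * (L v).card) → ColorableWith P H L := by
  intro n
  induction n with
  | zero =>
    intro H hc L _
    have hv : H.verts = ∅ := Finset.card_eq_zero.mp (Nat.le_zero.mp hc)
    refine ⟨fun _ => 0, by simp [hv], fun c => ?_⟩
    rw [hv, Finset.filter_empty, induce_empty]
    exact emptyHG_mem P hP
  | succ n ih =>
    intro H hc L hd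
    rcases Finset.eq_empty_or_nonempty H.verts with hv | ⟨v, hv⟩
    · refine ⟨fun _ => 0, by simp [hv], fun c => ?_⟩
      rw [hv, Finset.filter_empty, induce_empty]
      exact emptyHG_mem P hP
    set H' := H.deleteVert v with hH'
    have hH'v : H'.verts = H.verts.erase v := deleteVert_verts H v
    have hcard : H'.verts.card ≤ n := by
      rw [hH'v, Finset.card_erase_of_mem hv]
      omega
    have hdeg' : ∀ u ∈ H'.verts, H'.degree u < r * (L u).card := by
      intro u hu
      have hu' : u ∈ H.verts := by
        rw [hH'v] at hu; exact Finset.mem_of_mem_erase hu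
      exact lt_of_le_of_lt (degree_induce_le H _ u) (hd u hu')
    have hind : ∀ A : Finset ℕ, A ⊆ H.verts.erase v → H.induce A = H'.induce A := by
      intro A hA
      rw [hH', HGraph.deleteVert, induce_induce, Finset.inter_eq_left.mpr hA]
    obtain ⟨φ, hφ1, hφ2⟩ := ih H' hcard L hdeg'
    by_contra hnc
    -- every extension of φ to v fails
    have hfail : ∀ c ∈ L v,
        H.induce (H.verts.filter (fun u => Function.update φ v c u = c)) ∉ P := by
      intro c hc'
      set ψ := Function.update φ v c with hψ
      have hvalid : ∀ u ∈ H.verts, ψ u ∈ L u := by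
        intro u hu
        by_cases huv : u = v
        · subst huv; simp [hψ]; exact hc'
        · rw [hψ, Function.update_of_ne huv]
          exact hφ1 u (by rw [hH'v]; exact Finset.mem_erase.mpr ⟨huv, hu⟩)
      have hbad : ∃ d, H.induce (H.verts.filter (fun u => ψ u = d)) ∉ P := by
        by_contra hgood
        push_neg at hgood
        exact hnc ⟨ψ, hvalid, hgood⟩
      obtain ⟨d, hd'⟩ := hbad
      have hdc : d = c := by
        by_contra hne
        apply hd'
        have hAeq : H.verts.filter (fun u => ψ u = d)
            = H'.verts.filter (fun u => φ u = d) := by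
          ext u
          rw [hH'v]
          simp only [Finset.mem_filter, Finset.mem_erase]
          constructor
          · rintro ⟨hu, hud⟩
            have huv : u ≠ v := by
              rintro rfl
              rw [hψ, Function.update_self] at hud
              exact hne hud.symm
            rw [hψ, Function.update_of_ne huv] at hud
            exact ⟨⟨huv, hu⟩, hud⟩
          · rintro ⟨⟨huv, hu⟩, hud⟩
            rw [hψ, Function.update_of_ne huv]
            exact ⟨hu, hud⟩
        rw [hAeq]
        have hsub : H'.verts.filter (fun u => φ u = d) ⊆ H.verts.erase v := by
          rw [hH'v]; exact Finset.filter_subset _ _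
        rw [hind _ hsub]
        exact hφ2 d
      subst hdc
      exact hd'
    -- for each c, obtain a critical hypergraph containing v
    have hkey : ∀ c ∈ L v, ∃ T : Finset ℕ,
        T ⊆ H.verts.filter (fun u => Function.update φ v c u = c) ∧
        H.induce T ∈ critFam P ∧ v ∈ T := by
      intro c hc'
      obtain ⟨T, hTsub, hT⟩ := exists_crit P H _ (hfail c hc')
      refine ⟨T, hTsub, hT, ?_⟩
      by_contra hvT
      apply hT.1
      have hTsub' : T ⊆ H'.verts.filter (fun u => φ u = c) := by
        intro u hu
        have hu' := hTsub hu
        rw [Finset.mem_filter] at hu' ⊢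
        have huv : u ≠ v := fun h => hvT (h ▸ hu)
        rw [Function.update_of_ne huv] at hu'
        rw [hH'v]
        exact ⟨Finset.mem_erase.mpr ⟨huv, hu'.1⟩, hu'.2⟩
      have hsub2 : T ⊆ H.verts.erase v := hTsub'.trans (by rw [hH'v]; exact Finset.filter_subset _ _)
      have h1 : H.induce T = H'.induce T := hind T hsub2
      have h2 : H'.induce T = (H'.induce (H'.verts.filter (fun u => φ u = c))).induce T := by
        rw [induce_induce, Finset.inter_eq_left.mpr hTsub']
      rw [h1, h2]
      exact hP.2.1 _ (hφ2 c) T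
    choose T hT1 hT2 hT3 using hkey
    -- edge families
    set E : ℕ → Finset ℕ := fun c => H.edges.filter
      (fun e => H.inc e ⊆ (if h : c ∈ L v then T c h else ∅) ∩ H.verts ∧ v ∈ H.inc e)
      with hE
    have hEdeg : ∀ c (hc' : c ∈ L v), r ≤ (E c).card := by
      intro c hc'
      have hvG : v ∈ (H.induce (T c hc')).verts := by
        rw [induce_verts, Finset.mem_inter]
        exact ⟨hT3 c hc', hv⟩
      have := crit_minDeg P r hr (hT2 c hc') hvG
      refine this.trans ?_
      unfold HGraph.degree
      apply Finset.card_le_card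
      intro e he
      rw [Finset.mem_filter] at he
      obtain ⟨he1, he2⟩ := he
      rw [induce_inc_of_mem he1] at he2
      rw [hE, Finset.mem_filter]
      obtain ⟨heE, hesub⟩ := mem_induce_edges.mp he1
      rw [dif_pos hc']
      exact ⟨heE, hesub, he2⟩
    have hdisj : ∀ c₁ ∈ L v, ∀ c₂ ∈ L v, c₁ ≠ c₂ → Disjoint (E c₁) (E c₂) := by
      intro c₁ h1 c₂ h2 hne
      rw [Finset.disjoint_left]
      intro e he1 he2
      rw [hE, Finset.mem_filter, dif_pos h1] at he1
      rw [hE, Finset.mem_filter, dif_pos h2] at he2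
      obtain ⟨heE, hs1, hv1⟩ := he1
      obtain ⟨-, hs2, -⟩ := he2
      have hsubv : H.inc e ⊆ {v} := by
        intro u hu
        have hu1 := (hT1 c₁ h1) ((Finset.mem_inter.mp (hs1 hu)).1)
        have hu2 := (hT1 c₂ h2) ((Finset.mem_inter.mp (hs2 hu)).1)
        rw [Finset.mem_filter] at hu1 hu2
        rw [Finset.mem_singleton]
        by_contra huv
        rw [Function.update_of_ne huv] at hu1 hu2
        exact hne (hu1.2.symm ▸ hu2.2.symm ▸ rfl)
      have := H.two_le_inc e heE
      have hle : (H.inc e).card ≤ 1 := le_trans (Finset.card_le_card hsubv) (by simp)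
      omega
    have hsum : r * (L v).card ≤ H.degree v := by
      calc r * (L v).card = ∑ _c ∈ L v, r := by
            rw [Finset.sum_const, smul_eq_mul, mul_comm]
        _ ≤ ∑ c ∈ L v, (E c).card := Finset.sum_le_sum (fun c hc' => hEdeg c hc')
        _ = ((L v).biUnion E).card := (Finset.card_biUnion hdisj).symm
        _ ≤ H.degree v := by
            unfold HGraph.degree
            apply Finset.card_le_card
            intro e he
            rw [Finset.mem_biUnion] at he
            obtain ⟨c, hc', he⟩ := he
            rw [hE, Finset.mem_filter, dif_pos hc'] at he
            exact Finset.mem_filter.mpr ⟨he.1, he.2.2⟩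
    exact absurd (hd v hv) (not_lt.mpr hsum)

end Aux

/-- `χ^ℓ(H:P) ≤ Δ(H)/r + 1`. -/
theorem stmt10 (P : Set HGraph) (hP : Smooth P) (r : ℕ) (hr : dP P = r)
    (hr1 : 1 ≤ r) (H : HGraph) :
    (listChrom P H : ℚ) ≤ (H.maxDegree : ℚ) / (r : ℚ) + 1 := by
  have hmem : H.maxDegree / r + 1 ∈ {k : ℕ | ∀ L : ℕ → Finset ℕ,
      (∀ v ∈ H.verts, k ≤ (L v).card) → ColorableWith P H L} := by
    intro L hL
    apply colorable_of_deg P hP r hr H.verts.card H (le_refl _) L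
    intro v hv
    have h1 : H.degree v ≤ H.maxDegree := Finset.le_sup hv
    have h2 : H.maxDegree < r * (H.maxDegree / r + 1) := by
      have hdm := Nat.div_add_mod H.maxDegree r
      have hml : H.maxDegree % r < r := Nat.mod_lt _ (by omega)
      have hrw : r * (H.maxDegree / r + 1) = r * (H.maxDegree / r) + r := by ring
      omega
    have h3 : r * (H.maxDegree / r + 1) ≤ r * (L v).card :=
      Nat.mul_le_mul_left r (hL v hv)
    omega
  have hle : listChrom P H ≤ H.maxDegree / r + 1 := Nat.sInf_le hmem
  have hcast : (listChrom P H : ℚ) ≤ ((H.maxDegree / r + 1 : ℕ) : ℚ) := by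
    exact_mod_cast hle
  refine hcast.trans ?_
  push_cast
  have : ((H.maxDegree / r : ℕ) : ℚ) ≤ (H.maxDegree : ℚ) / (r : ℚ) := by
    apply Nat.cast_div_le
  linarith
end

section
/- Let δ ≥ 3 be an integer, r_δ = δ - 1 + 2/δ, and let H be a connected hypergraph with minimum degree at least δ such that H ≠ K_{δ+1}. Let U = {v ∈ V(H) : d_H(v) = δ} and suppose σ := |U|·r_δ - d(H(U)) ≥ 0 and U ≠ V(H). Then d(H) ≥ δn + n(δ-2)/(δ² + 2δ - 2) where n = |V(H)|. -/
open FinHypergraph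

lemma double_count (V E : Finset ℕ) (f : ℕ → Finset ℕ) :
    ∑ v ∈ V, (E.filter (fun e => v ∈ f e)).card
      = ∑ e ∈ E, (V.filter (fun v => v ∈ f e)).card := by
  simp only [Finset.card_filter]
  exact Finset.sum_comm

lemma degSum_eq_sum_card (H : FinHypergraph) :
    H.degSum = ∑ e ∈ H.edges, (H.inc e).card := by
  unfold FinHypergraph.degSum FinHypergraph.degree
  rw [double_count]
  refine Finset.sum_congr rfl fun e he => ?_
  congr 1
  rw [Finset.filter_mem_eq_inter, Finset.inter_eq_right.mpr (H.inc_sub e he)]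

lemma sum_deg_eq (H : FinHypergraph) (U : Finset ℕ) :
    ∑ v ∈ U, H.degree v = ∑ e ∈ H.edges, (H.inc e ∩ U).card := by
  unfold FinHypergraph.degree
  rw [double_count]
  refine Finset.sum_congr rfl fun e he => ?_
  rw [Finset.filter_mem_eq_inter, Finset.inter_comm]

lemma shrink_degSum_eq (H : FinHypergraph) (U : Finset ℕ) (hU : U ⊆ H.verts) :
    (H.shrink U).degSum
      = ∑ e ∈ H.edges.filter (fun e => 2 ≤ (H.inc e ∩ U).card), (H.inc e ∩ U).card := by
  have hUV : U ∩ H.verts = U := Finset.inter_eq_left.mpr hU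
  unfold FinHypergraph.degSum FinHypergraph.degree FinHypergraph.shrink
  simp only [hUV]
  have hfc : ∀ v : ℕ,
      ((H.edges.filter (fun e => 2 ≤ (H.inc e ∩ U).card)).filter
        (fun e => v ∈ if e ∈ H.edges.filter (fun e => 2 ≤ (H.inc e ∩ U).card)
          then H.inc e ∩ U else ∅))
      = (H.edges.filter (fun e => 2 ≤ (H.inc e ∩ U).card)).filter
          (fun e => v ∈ H.inc e ∩ U) := by
    intro v
    refine Finset.filter_congr fun e he => ?_
    rw [if_pos he]
  simp only [hfc]
  rw [double_count]
  refine Finset.sum_congr rfl fun e he => ?_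
  rw [Finset.filter_mem_eq_inter]
  congr 1
  ext x
  simp only [Finset.mem_inter]
  tauto

/-- Gallai-type degree-sum bound assuming `σ ≥ 0` and `U ≠ V(H)`. -/
theorem stmt18 (δ : ℕ) (hδ : 3 ≤ δ) (rδ : ℚ) (hrδ : rδ = (δ : ℚ) - 1 + 2 / (δ : ℚ))
    (H : FinHypergraph) (hconn : H.Connected) (hmin : δ ≤ H.minDegree)
    (hK : ¬ IsTK H 1 (δ + 1))
    (U : Finset ℕ) (hU : U = H.verts.filter (fun v => H.degree v = δ))
    (hσ : 0 ≤ (U.card : ℚ) * rδ - ((H.shrink U).degSum : ℚ))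
    (hUne : U ≠ H.verts) :
    (δ : ℚ) * (H.verts.card : ℚ) +
        (H.verts.card : ℚ) * ((δ : ℚ) - 2) / ((δ : ℚ) ^ 2 + 2 * (δ : ℚ) - 2) ≤
      (H.degSum : ℚ) := by
  classical
  have hne : H.verts.Nonempty := hconn.1
  have hUsub : U ⊆ H.verts := by rw [hU]; exact Finset.filter_subset _ _
  have hdegU : ∀ v ∈ U, H.degree v = δ := by
    intro v hv; rw [hU] at hv; exact (Finset.mem_filter.mp hv).2
  have hdegV : ∀ v ∈ H.verts, δ ≤ H.degree v := by
    intro v hv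
    refine le_trans hmin ?_
    unfold FinHypergraph.minDegree
    rw [dif_pos hne]
    exact Finset.inf'_le _ hv
  -- Inequality A : (δ+1) * n ≤ d + u
  have hA : (δ + 1) * H.verts.card ≤ H.degSum + U.card := by
    have h1 : ∑ _v ∈ H.verts, (δ + 1)
        ≤ ∑ v ∈ H.verts, (H.degree v + if v ∈ U then 1 else 0) := by
      refine Finset.sum_le_sum fun v hv => ?_
      by_cases hvU : v ∈ U
      · rw [hdegU v hvU, if_pos hvU]
      · rw [if_neg hvU]
        have h2 : H.degree v ≠ δ := fun h => hvU (by rw [hU]; exact Finset.mem_filter.mpr ⟨hv, h⟩)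
        have h3 := hdegV v hv
        omega
    rw [Finset.sum_const, smul_eq_mul, Finset.sum_add_distrib] at h1
    have h4 : ∑ v ∈ H.verts, (if v ∈ U then 1 else 0) = U.card := by
      rw [Finset.sum_ite_mem, Finset.inter_eq_right.mpr hUsub, Finset.card_eq_sum_ones]
    rw [h4] at h1
    calc (δ + 1) * H.verts.card = H.verts.card * (δ + 1) := Nat.mul_comm _ _
      _ ≤ _ := h1
  -- Inequality B : 2δu ≤ d + s
  have hdu : ∑ v ∈ U, H.degree v = δ * U.card := by
    rw [Finset.sum_congr rfl hdegU, Finset.sum_const, smul_eq_mul, Nat.mul_comm]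
  have hB : 2 * (δ * U.card) ≤ H.degSum + (H.shrink U).degSum := by
    rw [degSum_eq_sum_card, shrink_degSum_eq H U hUsub, ← hdu, sum_deg_eq,
      Finset.sum_filter, ← Finset.sum_add_distrib, Finset.mul_sum]
    refine Finset.sum_le_sum fun e he => ?_
    have hsub : (H.inc e ∩ U).card ≤ (H.inc e).card :=
      Finset.card_le_card Finset.inter_subset_left
    have h2 := H.two_le_inc e he
    split <;> omega
  -- Pass to ℚ
  have hAq : ((δ : ℚ) + 1) * (H.verts.card : ℚ) ≤ (H.degSum : ℚ) + (U.card : ℚ) := by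
    exact_mod_cast hA
  have hBq : 2 * ((δ : ℚ) * (U.card : ℚ)) ≤ (H.degSum : ℚ) + ((H.shrink U).degSum : ℚ) := by
    exact_mod_cast hB
  have hδq : (3 : ℚ) ≤ (δ : ℚ) := by exact_mod_cast hδ
  have hδ0 : (0 : ℚ) < (δ : ℚ) := by linarith
  set d : ℚ := (H.degSum : ℚ)
  set n : ℚ := (H.verts.card : ℚ)
  set u : ℚ := (U.card : ℚ)
  set s : ℚ := ((H.shrink U).degSum : ℚ)
  have hC : s ≤ u * ((δ : ℚ) - 1 + 2 / (δ : ℚ)) := by rw [← hrδ]; linarith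
  have hu0 : (0 : ℚ) ≤ u := by positivity
  have hδne : ((δ : ℚ)) ≠ 0 := ne_of_gt hδ0
  have hCδ : s * (δ : ℚ) ≤ u * ((δ : ℚ) ^ 2 - (δ : ℚ) + 2) := by
    have h5 := mul_le_mul_of_nonneg_right hC (le_of_lt hδ0)
    have h6 : ((δ : ℚ) - 1 + 2 / (δ : ℚ)) * (δ : ℚ) = (δ : ℚ) ^ 2 - (δ : ℚ) + 2 := by
      field_simp
    calc s * (δ : ℚ) ≤ u * ((δ : ℚ) - 1 + 2 / (δ : ℚ)) * (δ : ℚ) := h5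
      _ = u * (((δ : ℚ) - 1 + 2 / (δ : ℚ)) * (δ : ℚ)) := by ring
      _ = u * ((δ : ℚ) ^ 2 - (δ : ℚ) + 2) := by rw [h6]
  -- key : n (δ+1)(δ²+δ-2) ≤ d (δ²+2δ-2)
  have hBδ : 2 * ((δ : ℚ) * u) * (δ : ℚ) ≤ (d + s) * (δ : ℚ) :=
    mul_le_mul_of_nonneg_right hBq (le_of_lt hδ0)
  have huδ : u * ((δ : ℚ) ^ 2 + (δ : ℚ) - 2) ≤ d * (δ : ℚ) := by nlinarith
  have key : n * ((δ : ℚ) + 1) * ((δ : ℚ) ^ 2 + (δ : ℚ) - 2)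
      ≤ d * ((δ : ℚ) ^ 2 + 2 * (δ : ℚ) - 2) := by nlinarith
  have hD : (0 : ℚ) < (δ : ℚ) ^ 2 + 2 * (δ : ℚ) - 2 := by nlinarith
  have h3 : n * ((δ : ℚ) - 2) / ((δ : ℚ) ^ 2 + 2 * (δ : ℚ) - 2) ≤ d - (δ : ℚ) * n := by
    rw [div_le_iff₀ hD]; nlinarith
  linarith
end
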